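/- arXiv:1806.05546 — 2 statements merged into one kernel-verified Lean document; each statement's English description precedes it below -/
import Mathlib

section
/- Fix ε > 0 and define iterates f_{τ+1} = f_τ − μ̄·g_ε(f_τ) from an arbitrary f_0 ∈ ℂ^N, where μ̄ = 1/L̄ with L̄ = λmax(A^H A) > 0. Then for every T ≥ 0, Σ_{τ=0}^{T} ‖g_ε(f_τ)‖₂² ≤ L̄·(L_ε(f_0) − inf_{f ∈ ℂ^N} L_ε(f)). -/
open scoped BigOperators
open Matrix

noncomputable section

namespace AWF

/-- Complex signum: `z/|z|` for `z ≠ 0`, and `0` at `0`. -/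
def csgn (z : ℂ) : ℂ := if z = 0 then 0 else z / ((‖z‖ : ℝ) : ℂ)

variable {M N : ℕ}

/-- Amplitude loss `L(f) = ∑ (b_m − |(Af)_m|)²`. -/
def ampLoss (A : Matrix (Fin M) (Fin N) ℂ) (b : Fin M → ℝ) (f : Fin N → ℂ) : ℝ :=
  ∑ m, (b m - ‖A.mulVec f m‖) ^ 2

/-- Generalized (Wirtinger) gradient `G(f) = Aᴴ(Af − b ⊙ sgn(Af))`. -/
def wGrad (A : Matrix (Fin M) (Fin N) ℂ) (b : Fin M → ℝ) (f : Fin N → ℂ) : Fin N → ℂ :=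
  Aᴴ.mulVec (fun m => A.mulVec f m - (b m : ℂ) * csgn (A.mulVec f m))

/-- Euclidean (ℓ₂) norm of a complex vector. -/
def norm2 {n : ℕ} (v : Fin n → ℂ) : ℝ := Real.sqrt (∑ i, ‖v i‖ ^ 2)

/-- The largest eigenvalue of the positive semidefinite Hermitian matrix `Aᴴ A`. -/
def lamMax (A : Matrix (Fin M) (Fin N) ℂ) : ℝ :=
  ⨆ i, (Matrix.isHermitian_conjTranspose_mul_self A).eigenvalues i

end AWF

namespace AWF

variable {M N : ℕ}

/-- Smoothed amplitude loss `L_ε(f) = ∑ (√(|(Af)_m|² + ε) − b_m)²`. -/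
def smLoss (A : Matrix (Fin M) (Fin N) ℂ) (b : Fin M → ℝ) (ε : ℝ) (f : Fin N → ℂ) : ℝ :=
  ∑ m, (Real.sqrt (‖A.mulVec f m‖ ^ 2 + ε) - b m) ^ 2

/-- Wirtinger gradient of the smoothed loss:
`g_ε(f) = ∑_m (1 − b_m/√(|(Af)_m|²+ε)) (a_m a_mᴴ) f`, where `a_mᴴ` is the `m`-th row of `A`. -/
def smGrad (A : Matrix (Fin M) (Fin N) ℂ) (b : Fin M → ℝ) (ε : ℝ) (f : Fin N → ℂ) :
    Fin N → ℂ := fun n =>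
  ∑ m, (((1 - b m / Real.sqrt (‖A.mulVec f m‖ ^ 2 + ε)) : ℝ) : ℂ)
      * (star (A m n) * A.mulVec f m)

end AWF


namespace AWF

local notation "⟪" x ", " y "⟫" => @inner ℂ _ _ x y

lemma scalar_smooth (b ε : ℝ) (hb : 0 ≤ b) (hε : 0 < ε) (u u' : ℂ) :
    (Real.sqrt (‖u'‖^2 + ε) - b)^2 ≤ (Real.sqrt (‖u‖^2 + ε) - b)^2
      + 2 * (1 - b / Real.sqrt (‖u‖^2 + ε)) * ((starRingEnd ℂ) u * (u' - u)).re
      + ‖u' - u‖^2 := by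
  set s := Real.sqrt (‖u‖^2 + ε) with hsdef
  set s' := Real.sqrt (‖u'‖^2 + ε) with hs'def
  set r := ((starRingEnd ℂ) u * (u' - u)).re with hrdef
  have hs : 0 < s := Real.sqrt_pos.2 (by positivity)
  have hs' : 0 < s' := Real.sqrt_pos.2 (by positivity)
  have hs2 : s^2 = ‖u‖^2 + ε := Real.sq_sqrt (by positivity)
  have hs'2 : s'^2 = ‖u'‖^2 + ε := Real.sq_sqrt (by positivity)
  have hmul : ∀ z : ℂ, ((starRingEnd ℂ) z * z).re = ‖z‖^2 := by
    intro z
    rw [mul_comm, Complex.mul_conj, Complex.ofReal_re, Complex.normSq_eq_norm_sq]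
  have hr1 : r = ((starRingEnd ℂ) u * u').re - ‖u‖^2 := by
    rw [hrdef, mul_sub, Complex.sub_re, hmul]
  have hnorm : ‖u'‖^2 = ‖u‖^2 + 2*r + ‖u' - u‖^2 := by
    have h := hmul (u + (u' - u))
    have h2 : ((starRingEnd ℂ) (u + (u' - u)) * (u + (u' - u))).re
        = ‖u‖^2 + 2*r + ‖u' - u‖^2 := by
      rw [map_add, add_mul, mul_add, mul_add]
      have hsymm : ((starRingEnd ℂ) (u' - u) * u).re = r := by
        rw [hrdef, ← Complex.conj_re ((starRingEnd ℂ) u * (u' - u)), _root_.map_mul,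
          Complex.conj_conj, mul_comm]
      simp only [Complex.add_re, hmul, hsymm, hrdef]
      ring
    have huu : u + (u' - u) = u' := by ring
    rw [← h2, h, huu]
  have hCS : ((starRingEnd ℂ) u * u').re ≤ ‖u‖ * ‖u'‖ := by
    calc ((starRingEnd ℂ) u * u').re ≤ ‖(starRingEnd ℂ) u * u'‖ := Complex.re_le_norm _
    _ = ‖u‖ * ‖u'‖ := by rw [norm_mul, RCLike.norm_conj]
  have hkey : ‖u‖ * ‖u'‖ + ε ≤ s * s' := by
    have h1 : ‖u‖ * ‖u'‖ + ε = Real.sqrt ((‖u‖ * ‖u'‖ + ε)^2) :=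
      (Real.sqrt_sq (by positivity)).symm
    have h2 : s * s' = Real.sqrt ((‖u‖^2 + ε) * (‖u'‖^2 + ε)) :=
      (Real.sqrt_mul (by positivity) _).symm
    rw [h1, h2]
    apply Real.sqrt_le_sqrt
    nlinarith [sq_nonneg (‖u‖ - ‖u'‖), sq_nonneg (‖u‖*‖u'‖)]
  have hkey2 : b * (s^2 + r) ≤ b * (s * s') := by
    apply mul_le_mul_of_nonneg_left _ hb
    rw [hs2, hr1]; linarith
  have hstep : b / s * r ≤ b * s' - b * s := by
    rw [div_mul_eq_mul_div, div_le_iff₀ hs]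
    nlinarith [hkey2]
  nlinarith [hstep, hs2, hs'2, hnorm]

lemma conj_mul_self_re (z : ℂ) : ((starRingEnd ℂ) z * z).re = ‖z‖^2 := by
  rw [mul_comm, Complex.mul_conj, Complex.ofReal_re, Complex.normSq_eq_norm_sq]

lemma dot_star_self_re {K : ℕ} (w : Fin K → ℂ) : (star w ⬝ᵥ w).re = ∑ m, ‖w m‖^2 := by
  rw [dotProduct, Complex.re_sum]
  refine Finset.sum_congr rfl fun m _ => ?_
  simp only [Pi.star_apply, RCLike.star_def]
  exact conj_mul_self_re _

lemma sum_sq_mulVec_le {M N : ℕ} (A : Matrix (Fin M) (Fin N) ℂ) (d : Fin N → ℂ) :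
    ∑ m, ‖A.mulVec d m‖^2 ≤ lamMax A * ∑ n, ‖d n‖^2 := by
  classical
  have hB := Matrix.isHermitian_conjTranspose_mul_self A
  set B : Matrix (Fin N) (Fin N) ℂ := Aᴴ * A with hBmat
  set V := hB.eigenvectorBasis with hVdef
  set lam := hB.eigenvalues with hlamdef
  let toE : (Fin N → ℂ) → EuclideanSpace ℂ (Fin N) := fun x => WithLp.toLp 2 x
  have hinner : ∀ x y : Fin N → ℂ, ⟪toE x, toE y⟫ = star x ⬝ᵥ y := fun x y => by
    rw [EuclideanSpace.inner_eq_star_dotProduct]; exact dotProduct_comm _ _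
  have hquad : ⟪toE d, toE (B.mulVec d)⟫ = star (A.mulVec d) ⬝ᵥ (A.mulVec d) := by
    rw [hinner, hBmat, ← Matrix.mulVec_mulVec, Matrix.star_mulVec, ← Matrix.dotProduct_mulVec]
  have heig : ∀ j, ⟪V j, toE (B.mulVec d)⟫ = (lam j : ℂ) * ⟪V j, toE d⟫ := by
    intro j
    have h1 : ⟪V j, toE (B.mulVec d)⟫
        = star ((V j : EuclideanSpace ℂ (Fin N)) : Fin N → ℂ) ⬝ᵥ B.mulVec d := by
      rw [EuclideanSpace.inner_eq_star_dotProduct]; exact dotProduct_comm _ _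
    have h2 : ⟪V j, toE d⟫ = star ((V j : EuclideanSpace ℂ (Fin N)) : Fin N → ℂ) ⬝ᵥ d := by
      rw [EuclideanSpace.inner_eq_star_dotProduct]; exact dotProduct_comm _ _
    rw [h1, h2, Matrix.dotProduct_mulVec]
    have hsw : star ((V j : EuclideanSpace ℂ (Fin N)) : Fin N → ℂ) ᵥ* B
        = star (B.mulVec ((V j : EuclideanSpace ℂ (Fin N)) : Fin N → ℂ)) := by
      rw [Matrix.star_mulVec, hB]
    rw [hsw]
    have hBV : B.mulVec ((V j : EuclideanSpace ℂ (Fin N)) : Fin N → ℂ)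
        = (lam j : ℂ) • ((V j : EuclideanSpace ℂ (Fin N)) : Fin N → ℂ) := by
      have := hB.mulVec_eigenvectorBasis j
      simpa [hBmat, Matrix.mulVec_smul] using this
    rw [hBV]
    simp [dotProduct, Finset.mul_sum, mul_assoc, mul_comm, mul_left_comm]
  have hexp : ⟪toE d, toE (B.mulVec d)⟫
      = ∑ j, (lam j : ℂ) * ((‖⟪V j, toE d⟫‖^2 : ℝ) : ℂ) := by
    rw [← V.sum_inner_mul_inner (toE d) (toE (B.mulVec d))]
    refine Finset.sum_congr rfl fun j _ => ?_
    rw [heig j, ← inner_conj_symm (toE d) (V j)]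
    rw [show ((‖⟪V j, toE d⟫‖^2 : ℝ) : ℂ)
        = (starRingEnd ℂ) ⟪V j, toE d⟫ * ⟪V j, toE d⟫ from ?_]
    · ring
    · rw [mul_comm, Complex.mul_conj, Complex.normSq_eq_norm_sq,
        Complex.ofReal_pow]
  have hexp2 : ⟪toE d, toE d⟫ = ∑ j, ((‖⟪V j, toE d⟫‖^2 : ℝ) : ℂ) := by
    rw [← V.sum_inner_mul_inner (toE d) (toE d)]
    refine Finset.sum_congr rfl fun j _ => ?_
    rw [← inner_conj_symm (toE d) (V j), mul_comm, Complex.mul_conj, Complex.normSq_eq_norm_sq, Complex.ofReal_pow]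
  have hbdd : ∀ j, lam j ≤ lamMax A := fun j =>
    le_ciSup (Set.Finite.bddAbove (Set.finite_range _)) j
  have hL : ∑ m, ‖A.mulVec d m‖^2 = ∑ j, lam j * ‖⟪V j, toE d⟫‖^2 := by
    rw [← dot_star_self_re, ← hquad, hexp, Complex.re_sum]
    refine Finset.sum_congr rfl fun j _ => ?_
    rw [← Complex.ofReal_mul, Complex.ofReal_re]
  have hR : ∑ n, ‖d n‖^2 = ∑ j, ‖⟪V j, toE d⟫‖^2 := by
    have h1 : (⟪toE d, toE d⟫).re = ∑ n, ‖d n‖^2 := by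
      rw [hinner]; exact dot_star_self_re d
    rw [← h1, hexp2, Complex.re_sum]
    refine Finset.sum_congr rfl fun j _ => ?_
    rw [Complex.ofReal_re]
  rw [hL, hR, Finset.mul_sum]
  refine Finset.sum_le_sum fun j _ => ?_
  exact mul_le_mul_of_nonneg_right (hbdd j) (by positivity)

lemma grad_inner {M N : ℕ} (A : Matrix (Fin M) (Fin N) ℂ) (b : Fin M → ℝ) (ε : ℝ)
    (f : Fin N → ℂ) :
    ∑ m, (1 - b m / Real.sqrt (‖A.mulVec f m‖^2 + ε))
        * ((starRingEnd ℂ) (A.mulVec f m) * (A.mulVec (smGrad A b ε f) m)).re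
      = ∑ n, ‖smGrad A b ε f n‖^2 := by
  classical
  set g := smGrad A b ε f with hg
  set c : Fin M → ℝ := fun m => 1 - b m / Real.sqrt (‖A.mulVec f m‖^2 + ε) with hc
  have key : ∑ m, ((c m : ℝ) : ℂ) * ((starRingEnd ℂ) (A.mulVec f m) * (A.mulVec g m))
      = ∑ n, (starRingEnd ℂ) (g n) * g n := by
    have hgn : ∀ n, (starRingEnd ℂ) (g n)
        = ∑ m, ((c m : ℝ) : ℂ) * (A m n * (starRingEnd ℂ) (A.mulVec f m)) := by
      intro n
      rw [show g n = ∑ m, ((c m : ℝ) : ℂ) * (star (A m n) * A.mulVec f m) from rfl, map_sum]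
      refine Finset.sum_congr rfl fun m _ => ?_
      rw [_root_.map_mul, _root_.map_mul, Complex.conj_ofReal]
      congr 1
      congr 1
      exact Complex.conj_conj _
    have hmv : ∀ m, A.mulVec g m = ∑ n, A m n * g n := fun m => rfl
    calc ∑ m, ((c m : ℝ) : ℂ) * ((starRingEnd ℂ) (A.mulVec f m) * (A.mulVec g m))
        = ∑ m, ∑ n, ((c m : ℝ) : ℂ) * (A m n * (starRingEnd ℂ) (A.mulVec f m)) * g n := by
          refine Finset.sum_congr rfl fun m _ => ?_
          rw [hmv, Finset.mul_sum, Finset.mul_sum]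
          refine Finset.sum_congr rfl fun n _ => ?_
          ring
      _ = ∑ n, (∑ m, ((c m : ℝ) : ℂ) * (A m n * (starRingEnd ℂ) (A.mulVec f m))) * g n := by
          rw [Finset.sum_comm]
          refine Finset.sum_congr rfl fun n _ => ?_
          rw [Finset.sum_mul]
      _ = ∑ n, (starRingEnd ℂ) (g n) * g n := by
          refine Finset.sum_congr rfl fun n _ => ?_
          rw [hgn]
  have h1 := congrArg Complex.re key
  rw [Complex.re_sum, Complex.re_sum] at h1
  calc ∑ m, c m * ((starRingEnd ℂ) (A.mulVec f m) * (A.mulVec g m)).re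
      = ∑ m, (((c m : ℝ) : ℂ) * ((starRingEnd ℂ) (A.mulVec f m) * (A.mulVec g m))).re := by
        refine Finset.sum_congr rfl fun m _ => ?_
        rw [Complex.re_ofReal_mul]
    _ = ∑ n, ((starRingEnd ℂ) (g n) * g n).re := h1
    _ = ∑ n, ‖g n‖^2 := by
        refine Finset.sum_congr rfl fun n _ => ?_
        exact conj_mul_self_re _

lemma descent {M N : ℕ} (A : Matrix (Fin M) (Fin N) ℂ) (b : Fin M → ℝ) (hb : ∀ m, 0 ≤ b m)
    (hpos : 0 < lamMax A) (ε : ℝ) (hε : 0 < ε) (f : Fin N → ℂ) :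
    ∑ n, ‖smGrad A b ε f n‖^2
      ≤ lamMax A * (smLoss A b ε f - smLoss A b ε (f - (1 / lamMax A) • smGrad A b ε f)) := by
  classical
  set L := lamMax A with hLdef
  set g := smGrad A b ε f with hg
  set f' := f - (1 / L) • g with hf'
  set S := ∑ n, ‖g n‖^2 with hS
  have hLne : L ≠ 0 := ne_of_gt hpos
  have hd : ∀ m, A.mulVec f' m - A.mulVec f m = ((-(1/L) : ℝ) : ℂ) * A.mulVec g m := by
    intro m
    rw [hf', Matrix.mulVec_sub, Matrix.mulVec_smul]
    simp only [Pi.sub_apply, Pi.smul_apply, Complex.real_smul]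
    push_cast
    ring
  have stepA : smLoss A b ε f' ≤ smLoss A b ε f
      + ∑ m, 2 * (1 - b m / Real.sqrt (‖A.mulVec f m‖^2 + ε))
          * ((starRingEnd ℂ) (A.mulVec f m) * (A.mulVec f' m - A.mulVec f m)).re
      + ∑ m, ‖A.mulVec f' m - A.mulVec f m‖^2 := by
    have h : ∀ m ∈ Finset.univ, (Real.sqrt (‖A.mulVec f' m‖^2 + ε) - b m)^2
        ≤ (Real.sqrt (‖A.mulVec f m‖^2 + ε) - b m)^2
          + 2 * (1 - b m / Real.sqrt (‖A.mulVec f m‖^2 + ε))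
            * ((starRingEnd ℂ) (A.mulVec f m) * (A.mulVec f' m - A.mulVec f m)).re
          + ‖A.mulVec f' m - A.mulVec f m‖^2 :=
      fun m _ => scalar_smooth (b m) ε (hb m) hε (A.mulVec f m) (A.mulVec f' m)
    calc smLoss A b ε f' = ∑ m, (Real.sqrt (‖A.mulVec f' m‖^2 + ε) - b m)^2 := rfl
      _ ≤ ∑ m, ((Real.sqrt (‖A.mulVec f m‖^2 + ε) - b m)^2
          + 2 * (1 - b m / Real.sqrt (‖A.mulVec f m‖^2 + ε))
            * ((starRingEnd ℂ) (A.mulVec f m) * (A.mulVec f' m - A.mulVec f m)).re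
          + ‖A.mulVec f' m - A.mulVec f m‖^2) := Finset.sum_le_sum h
      _ = smLoss A b ε f
          + ∑ m, 2 * (1 - b m / Real.sqrt (‖A.mulVec f m‖^2 + ε))
              * ((starRingEnd ℂ) (A.mulVec f m) * (A.mulVec f' m - A.mulVec f m)).re
          + ∑ m, ‖A.mulVec f' m - A.mulVec f m‖^2 := by
        rw [Finset.sum_add_distrib, Finset.sum_add_distrib]
        rfl
  have hmid : ∑ m, 2 * (1 - b m / Real.sqrt (‖A.mulVec f m‖^2 + ε))
      * ((starRingEnd ℂ) (A.mulVec f m) * (A.mulVec f' m - A.mulVec f m)).re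
      = -(2/L) * S := by
    calc ∑ m, 2 * (1 - b m / Real.sqrt (‖A.mulVec f m‖^2 + ε))
        * ((starRingEnd ℂ) (A.mulVec f m) * (A.mulVec f' m - A.mulVec f m)).re
        = ∑ m, (-(2/L)) * ((1 - b m / Real.sqrt (‖A.mulVec f m‖^2 + ε))
            * ((starRingEnd ℂ) (A.mulVec f m) * (A.mulVec g m)).re) := by
          refine Finset.sum_congr rfl fun m _ => ?_
          rw [hd m]
          rw [show (starRingEnd ℂ) (A.mulVec f m) * (((-(1/L) : ℝ) : ℂ) * A.mulVec g m)
              = ((-(1/L) : ℝ) : ℂ) * ((starRingEnd ℂ) (A.mulVec f m) * A.mulVec g m) from by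
            ring]
          rw [Complex.re_ofReal_mul]
          ring
      _ = -(2/L) * ∑ m, (1 - b m / Real.sqrt (‖A.mulVec f m‖^2 + ε))
            * ((starRingEnd ℂ) (A.mulVec f m) * (A.mulVec g m)).re := by
          rw [← Finset.mul_sum]
      _ = -(2/L) * S := by rw [hg, grad_inner A b ε f]
  have hlast : ∑ m, ‖A.mulVec f' m - A.mulVec f m‖^2 ≤ (1/L) * S := by
    have h1 : ∑ m, ‖A.mulVec f' m - A.mulVec f m‖^2 = (1/L)^2 * ∑ m, ‖A.mulVec g m‖^2 := by
      rw [Finset.mul_sum]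
      refine Finset.sum_congr rfl fun m _ => ?_
      rw [hd m, norm_mul, Complex.norm_real, mul_pow, Real.norm_eq_abs, sq_abs]
      ring
    have h2 := sum_sq_mulVec_le A g
    calc ∑ m, ‖A.mulVec f' m - A.mulVec f m‖^2 = (1/L)^2 * ∑ m, ‖A.mulVec g m‖^2 := h1
      _ ≤ (1/L)^2 * (L * S) := by
        apply mul_le_mul_of_nonneg_left _ (by positivity)
        exact h2
      _ = (1/L) * S := by field_simp
  have hfinal : smLoss A b ε f' ≤ smLoss A b ε f - (1/L) * S := by
    calc smLoss A b ε f' ≤ smLoss A b ε f + (-(2/L) * S) + ∑ m, ‖A.mulVec f' m - A.mulVec f m‖^2 := by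
          rw [← hmid]; exact stepA
      _ ≤ smLoss A b ε f + (-(2/L) * S) + (1/L) * S := by linarith [hlast]
      _ = smLoss A b ε f - (1/L) * S + (-(1/L) * S) + (1/L) * S := by ring
      _ = smLoss A b ε f - (1/L) * S := by ring
  have hLS : L * ((1/L) * S) = S := by field_simp
  have h' : (1/L) * S ≤ smLoss A b ε f - smLoss A b ε f' := by linarith
  calc S = L * ((1/L) * S) := hLS.symm
    _ ≤ L * (smLoss A b ε f - smLoss A b ε f') := by
      exact mul_le_mul_of_nonneg_left h' hpos.le

end AWF

namespace AWF

/-- For iterates `f_{τ+1} = f_τ − μ̄ g_ε(f_τ)` with `μ̄ = 1/L̄`,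
`L̄ = λmax(AᴴA) > 0`: `∑_{τ=0}^T ‖g_ε(f_τ)‖₂² ≤ L̄ (L_ε(f_0) − inf L_ε)`. -/
theorem smLoss_sum_grad_bound
    {M N : ℕ} (A : Matrix (Fin M) (Fin N) ℂ) (b : Fin M → ℝ) (hb : ∀ m, 0 ≤ b m)
    (hpos : 0 < lamMax A) (ε : ℝ) (hε : 0 < ε)
    (f : ℕ → Fin N → ℂ)
    (hiter : ∀ τ, f (τ + 1) = f τ - (1 / lamMax A) • smGrad A b ε (f τ))
    (T : ℕ) :
    ∑ τ ∈ Finset.range (T + 1), norm2 (smGrad A b ε (f τ)) ^ 2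
      ≤ lamMax A * (smLoss A b ε (f 0) - ⨅ g : Fin N → ℂ, smLoss A b ε g) := by
  classical
  set L := lamMax A with hLdef
  have hstep : ∀ τ, ∑ n, ‖smGrad A b ε (f τ) n‖^2
      ≤ L * (smLoss A b ε (f τ) - smLoss A b ε (f (τ+1))) := by
    intro τ
    rw [hiter τ]
    exact descent A b hb hpos ε hε (f τ)
  have hnorm2 : ∀ v : Fin N → ℂ, norm2 v ^ 2 = ∑ i, ‖v i‖^2 := by
    intro v
    rw [norm2, Real.sq_sqrt]
    exact Finset.sum_nonneg fun i _ => by positivity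
  have hinf : (⨅ g : Fin N → ℂ, smLoss A b ε g) ≤ smLoss A b ε (f (T+1)) := by
    apply ciInf_le
    refine ⟨0, ?_⟩
    rintro x ⟨g₀, rfl⟩
    exact Finset.sum_nonneg fun m _ => sq_nonneg _
  calc ∑ τ ∈ Finset.range (T + 1), norm2 (smGrad A b ε (f τ)) ^ 2
      = ∑ τ ∈ Finset.range (T + 1), ∑ n, ‖smGrad A b ε (f τ) n‖^2 := by
        refine Finset.sum_congr rfl fun τ _ => hnorm2 _
    _ ≤ ∑ τ ∈ Finset.range (T + 1), L * (smLoss A b ε (f τ) - smLoss A b ε (f (τ+1))) :=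
        Finset.sum_le_sum fun τ _ => hstep τ
    _ = L * ∑ τ ∈ Finset.range (T + 1), (smLoss A b ε (f τ) - smLoss A b ε (f (τ+1))) :=
        (Finset.mul_sum _ _ _).symm
    _ = L * (smLoss A b ε (f 0) - smLoss A b ε (f (T+1))) := by
        rw [Finset.sum_range_sub' (fun τ => smLoss A b ε (f τ))]
    _ ≤ L * (smLoss A b ε (f 0) - ⨅ g : Fin N → ℂ, smLoss A b ε g) := by
        apply mul_le_mul_of_nonneg_left _ hpos.le
        exact sub_le_sub_left hinf _

end AWF
end
end

section
/- For every f ∈ ℂ^N, one generalized-gradient step with the fixed step size μ̄ = 1/λmax(A^H A) decreases the amplitude loss: L(f − μ̄·G(f)) ≤ L(f) − μ̄·‖G(f)‖₂², where λmax(A^H A) is assumed positive. -/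
open scoped BigOperators
open Matrix

noncomputable section

namespace AWF

/-! ### Auxiliary lemmas -/

lemma re_star_dot {n : ℕ} (v : Fin n → ℂ) : (star v ⬝ᵥ v).re = ∑ i, ‖v i‖ ^ 2 := by
  simp [dotProduct, ← Complex.sq_norm, Complex.normSq_eq_norm_sq,
    ← Complex.normSq_eq_conj_mul_self, ← Complex.ofReal_pow, Complex.ofReal_re]

/-- Rayleigh-quotient bound: `‖Ag‖² ≤ λmax(AᴴA)‖g‖²`. -/
lemma spectral_bound {M N : ℕ} (A : Matrix (Fin M) (Fin N) ℂ) (g : Fin N → ℂ) :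
    ∑ m, ‖A.mulVec g m‖ ^ 2 ≤ lamMax A * ∑ j, ‖g j‖ ^ 2 := by
  classical
  set hB := Matrix.isHermitian_conjTranspose_mul_self A with hhB
  set U : Matrix (Fin N) (Fin N) ℂ := (hB.eigenvectorUnitary : Matrix (Fin N) (Fin N) ℂ) with hU
  set w : Fin N → ℂ := star U *ᵥ g with hw
  have hUU : U * star U = 1 := (Matrix.mem_unitaryGroup_iff).mp hB.eigenvectorUnitary.2
  have hdot : ∀ x : Fin N → ℂ, star g ⬝ᵥ (U *ᵥ x) = star w ⬝ᵥ x := by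
    intro x
    rw [hw, Matrix.star_mulVec, Matrix.dotProduct_mulVec, Matrix.star_eq_conjTranspose,
      Matrix.conjTranspose_conjTranspose]
  have hUw : U *ᵥ w = g := by rw [hw, Matrix.mulVec_mulVec, hUU, Matrix.one_mulVec]
  have h1 : ∑ m, ‖A.mulVec g m‖ ^ 2 = (star g ⬝ᵥ ((Aᴴ * A) *ᵥ g)).re := by
    rw [← Matrix.mulVec_mulVec, Matrix.dotProduct_mulVec, ← Matrix.star_mulVec,
      re_star_dot]
  have h2 : (Aᴴ * A) *ᵥ g = U *ᵥ (Matrix.diagonal (RCLike.ofReal ∘ hB.eigenvalues) *ᵥ w) := by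
    conv_lhs => rw [hB.spectral_theorem, Unitary.conjStarAlgAut_apply]
    rw [← hU, Matrix.mul_assoc, ← Matrix.mulVec_mulVec, ← Matrix.mulVec_mulVec]
  have h3 : (star g ⬝ᵥ ((Aᴴ * A) *ᵥ g)).re = ∑ i, hB.eigenvalues i * ‖w i‖ ^ 2 := by
    rw [h2, hdot]
    simp only [dotProduct, Matrix.mulVec_diagonal, Pi.star_apply]
    rw [Complex.re_sum]
    congr 1; ext i
    have hc : (RCLike.ofReal ∘ hB.eigenvalues) i = ((hB.eigenvalues i : ℝ) : ℂ) := rfl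
    rw [hc, show star (w i) * (((hB.eigenvalues i : ℝ) : ℂ) * w i)
        = ((hB.eigenvalues i : ℝ) : ℂ) * (star (w i) * w i) by ring,
      show star (w i) * w i = ((Complex.normSq (w i) : ℝ) : ℂ) by
        rw [Complex.star_def, mul_comm, Complex.mul_conj],
      ← Complex.ofReal_mul, Complex.ofReal_re, Complex.normSq_eq_norm_sq]
  have hwg : ∑ i, ‖w i‖ ^ 2 = ∑ j, ‖g j‖ ^ 2 := by
    have h := hdot w
    rw [hUw] at h
    rw [← re_star_dot, ← h, re_star_dot]
  have hle : ∀ i, hB.eigenvalues i ≤ lamMax A :=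
    fun i => le_ciSup (Set.Finite.bddAbove (Set.finite_range _)) i
  calc ∑ m, ‖A.mulVec g m‖ ^ 2 = ∑ i, hB.eigenvalues i * ‖w i‖ ^ 2 := by rw [h1, h3]
  _ ≤ ∑ i, lamMax A * ‖w i‖ ^ 2 := by
      apply Finset.sum_le_sum
      intro i _
      exact mul_le_mul_of_nonneg_right (hle i) (by positivity)
  _ = lamMax A * ∑ i, ‖w i‖ ^ 2 := by rw [Finset.mul_sum]
  _ = lamMax A * ∑ j, ‖g j‖ ^ 2 := by rw [hwg]

lemma csgn_abs {z : ℂ} (hz : z ≠ 0) : ‖csgn z‖ = 1 := by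
  simp [csgn, hz, norm_div, Complex.norm_real, abs_of_nonneg (norm_nonneg z),
    div_self (norm_ne_zero_iff.mpr hz)]

/-- Pointwise majorization inequality. -/
lemma pointwise_bound (y c : ℂ) (b μ : ℝ) (hb : 0 ≤ b) (hμ : 0 ≤ μ) :
    (b - ‖y - (μ:ℂ) * c‖) ^ 2
      ≤ ‖(y - (b:ℂ) * csgn y) - (μ:ℂ) * c‖ ^ 2 + (if y = 0 then b ^ 2 else 0) := by
  by_cases hy : y = 0
  · subst hy
    have habs : ‖0 - (μ:ℂ) * c‖ = μ * ‖c‖ := by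
      rw [zero_sub, norm_neg, norm_mul, Complex.norm_real, Real.norm_eq_abs, abs_of_nonneg hμ]
    have hnorm : ‖((0:ℂ) - (b:ℂ) * csgn 0) - (μ:ℂ) * c‖ = μ * ‖c‖ := by
      rw [show ((0:ℂ) - (b:ℂ) * csgn 0) - (μ:ℂ) * c = -((μ:ℂ) * c) by simp [csgn]]
      rw [norm_neg, norm_mul, Complex.norm_real, Real.norm_eq_abs, abs_of_nonneg hμ]
    rw [if_pos rfl, habs, hnorm]
    nlinarith [mul_nonneg hb (mul_nonneg hμ (norm_nonneg c))]
  · rw [if_neg hy, add_zero]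
    have hkey : |b - ‖y - (μ:ℂ) * c‖| ≤ ‖(y - (b:ℂ) * csgn y) - (μ:ℂ) * c‖ := by
      have h1 : |‖y - (μ:ℂ) * c‖ - ‖(b:ℂ) * csgn y‖| ≤ ‖(y - (μ:ℂ) * c) - (b:ℂ) * csgn y‖ :=
        abs_norm_sub_norm_le _ _
      have h2 : ‖(b:ℂ) * csgn y‖ = b := by
        rw [norm_mul, Complex.norm_real, Real.norm_eq_abs,
          csgn_abs hy, abs_of_nonneg hb, mul_one]
      have h3 : (y - (μ:ℂ) * c) - (b:ℂ) * csgn y = (y - (b:ℂ) * csgn y) - (μ:ℂ) * c := by ring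
      rw [h2, h3] at h1
      rw [abs_sub_comm] at h1
      exact h1
    calc (b - ‖y - (μ:ℂ) * c‖) ^ 2
        = |b - ‖y - (μ:ℂ) * c‖| ^ 2 := (sq_abs _).symm
      _ ≤ ‖(y - (b:ℂ) * csgn y) - (μ:ℂ) * c‖ ^ 2 := by
          apply pow_le_pow_left₀ (abs_nonneg _) hkey

/-- Norm of residual entry equals loss entry. -/
lemma residual_sq (y : ℂ) (b : ℝ) :
    ‖y - (b:ℂ) * csgn y‖ ^ 2 + (if y = 0 then b ^ 2 else 0) = (b - ‖y‖) ^ 2 := by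
  by_cases hy : y = 0
  · simp [hy, csgn]
  · rw [if_neg hy, add_zero]
    have h : y - (b:ℂ) * csgn y = ((‖y‖ - b : ℝ) : ℂ) * csgn y := by
      simp only [csgn, if_neg hy]
      have hne : ((‖y‖ : ℝ) : ℂ) ≠ 0 := by
        simpa using hy
      field_simp
      push_cast
      ring
    rw [h, norm_mul, csgn_abs hy, mul_one,
      Complex.norm_real, Real.norm_eq_abs, sq_abs]
    ring

/-- The cross term identity `Re⟨Ag, r⟩ = ‖g‖²` for `g = Aᴴ r`. -/
lemma cross_term {M N : ℕ} (A : Matrix (Fin M) (Fin N) ℂ) (r : Fin M → ℂ) :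
    ∑ m, (star (A.mulVec (Aᴴ.mulVec r) m) * r m).re = ∑ j, ‖Aᴴ.mulVec r j‖ ^ 2 := by
  have h1 : star (A *ᵥ (Aᴴ *ᵥ r)) ⬝ᵥ r = star (Aᴴ *ᵥ r) ⬝ᵥ (Aᴴ *ᵥ r) := by
    rw [Matrix.star_mulVec, Matrix.dotProduct_mulVec]
  calc ∑ m, (star (A.mulVec (Aᴴ.mulVec r) m) * r m).re
      = (star (A *ᵥ (Aᴴ *ᵥ r)) ⬝ᵥ r).re := by
        rw [dotProduct, Complex.re_sum]
        rfl
    _ = (star (Aᴴ *ᵥ r) ⬝ᵥ (Aᴴ *ᵥ r)).re := by rw [h1]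
    _ = ∑ j, ‖Aᴴ.mulVec r j‖ ^ 2 := re_star_dot _

/-- Expansion of the squared norm of a difference. -/
lemma norm_sub_sq_expand (r c : ℂ) (μ : ℝ) :
    ‖r - (μ:ℂ) * c‖ ^ 2 = ‖r‖ ^ 2 - 2 * μ * (star c * r).re + μ ^ 2 * ‖c‖ ^ 2 := by
  have h := Complex.normSq_sub r ((μ:ℂ) * c)
  simp only [Complex.normSq_mul, Complex.normSq_ofReal] at h
  rw [Complex.sq_norm, Complex.sq_norm, Complex.sq_norm, h]
  have h2 : (r * (starRingEnd ℂ) ((μ:ℂ) * c)).re = μ * (star c * r).re := by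
    rw [RingHom.map_mul, Complex.conj_ofReal,
      show r * ((μ:ℂ) * (starRingEnd ℂ) c) = (μ:ℂ) * ((starRingEnd ℂ) c * r) by ring,
      Complex.re_ofReal_mul]
    rfl
  rw [h2]
  ring

end AWF

namespace AWF

/-- One generalized-gradient step with step size `μ̄ = 1/λmax(AᴴA)`
decreases the amplitude loss: `L(f − μ̄ G(f)) ≤ L(f) − μ̄ ‖G(f)‖₂²`. -/
theorem ampLoss_descent_step
    {M N : ℕ} (A : Matrix (Fin M) (Fin N) ℂ) (b : Fin M → ℝ) (hb : ∀ m, 0 ≤ b m)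
    (hpos : 0 < lamMax A) (f : Fin N → ℂ) :
    ampLoss A b (f - (1 / lamMax A) • wGrad A b f)
      ≤ ampLoss A b f - (1 / lamMax A) * norm2 (wGrad A b f) ^ 2 := by
  classical
  set μ : ℝ := 1 / lamMax A with hμdef
  have hμpos : 0 < μ := by
    rw [hμdef]; exact one_div_pos.mpr hpos
  set y : Fin M → ℂ := A.mulVec f with hy
  set r : Fin M → ℂ := fun m => y m - (b m : ℂ) * csgn (y m) with hrdef
  have hg : wGrad A b f = Aᴴ.mulVec r := rfl
  set g : Fin N → ℂ := wGrad A b f with hgdef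
  set c : Fin M → ℂ := A.mulVec g with hcdef
  set S : ℝ := ∑ j, ‖g j‖ ^ 2 with hS
  set T : ℝ := ∑ m, ‖c m‖ ^ 2 with hT
  -- the stepped vector
  have hstep : ∀ m, A.mulVec (f - μ • g) m = y m - (μ:ℂ) * c m := by
    intro m
    rw [Matrix.mulVec_sub, Matrix.mulVec_smul]
    simp only [Pi.sub_apply, Pi.smul_apply, Complex.real_smul]
    rfl
  -- cross term
  have hcross : ∑ m, (star (c m) * r m).re = S := by
    rw [hS, hcdef, hg]
    exact cross_term A r
  -- expansion of the shifted residual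
  have hexp : ∑ m, ‖r m - (μ:ℂ) * c m‖ ^ 2 = (∑ m, ‖r m‖ ^ 2) - 2 * μ * S + μ ^ 2 * T := by
    have : ∀ m, ‖r m - (μ:ℂ) * c m‖ ^ 2
        = ‖r m‖ ^ 2 - 2 * μ * (star (c m) * r m).re + μ ^ 2 * ‖c m‖ ^ 2 := fun m =>
      norm_sub_sq_expand (r m) (c m) μ
    rw [Finset.sum_congr rfl fun m _ => this m]
    rw [Finset.sum_add_distrib, Finset.sum_sub_distrib, ← Finset.mul_sum, ← Finset.mul_sum,
      hcross, hT]
  -- the loss at f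
  have hLf : ampLoss A b f = (∑ m, ‖r m‖ ^ 2) + ∑ m, (if y m = 0 then (b m) ^ 2 else 0) := by
    rw [ampLoss, ← Finset.sum_add_distrib]
    refine Finset.sum_congr rfl fun m _ => ?_
    rw [← residual_sq (y m) (b m)]
  -- main estimate
  have hmain : ampLoss A b (f - μ • g)
      ≤ ampLoss A b f - 2 * μ * S + μ ^ 2 * T := by
    rw [ampLoss]
    calc ∑ m, (b m - ‖A.mulVec (f - μ • g) m‖) ^ 2
        = ∑ m, (b m - ‖y m - (μ:ℂ) * c m‖) ^ 2 := by
          refine Finset.sum_congr rfl fun m _ => ?_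
          rw [hstep m]
      _ ≤ ∑ m, (‖r m - (μ:ℂ) * c m‖ ^ 2 + (if y m = 0 then (b m) ^ 2 else 0)) := by
          refine Finset.sum_le_sum fun m _ => ?_
          exact pointwise_bound (y m) (c m) (b m) μ (hb m) hμpos.le
      _ = (∑ m, ‖r m - (μ:ℂ) * c m‖ ^ 2) + ∑ m, (if y m = 0 then (b m) ^ 2 else 0) := by
          rw [Finset.sum_add_distrib]
      _ = ampLoss A b f - 2 * μ * S + μ ^ 2 * T := by
          rw [hexp, hLf]; ring
  -- spectral estimate
  have hspec : T ≤ lamMax A * S := by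
    rw [hT, hS, hcdef]
    exact spectral_bound A g
  have hμT : μ ^ 2 * T ≤ μ * S := by
    have h1 : μ ^ 2 * T ≤ μ ^ 2 * (lamMax A * S) :=
      mul_le_mul_of_nonneg_left hspec (sq_nonneg μ)
    have h2 : μ ^ 2 * (lamMax A * S) = μ * S := by
      rw [hμdef]; field_simp
    linarith
  -- norm2 squared
  have hnorm2 : norm2 g ^ 2 = S := by
    show Real.sqrt (∑ i, ‖g i‖ ^ 2) ^ 2 = S
    rw [Real.sq_sqrt (Finset.sum_nonneg fun j _ => sq_nonneg _)]
  have hSnn : 0 ≤ S := by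
    rw [hS]; exact Finset.sum_nonneg fun j _ => sq_nonneg _
  calc ampLoss A b (f - μ • g) ≤ ampLoss A b f - 2 * μ * S + μ ^ 2 * T := hmain
    _ ≤ ampLoss A b f - 2 * μ * S + μ * S := by linarith
    _ = ampLoss A b f - μ * S := by ring
    _ = ampLoss A b f - μ * norm2 g ^ 2 := by rw [hnorm2]

end AWF
end
end
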